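/- Two normalized disjunctive multiplicity expressions E_1 and E_2 define the same language of unordered words if and only if C_{E_1} = C_{E_2}, N_{E_1} = N_{E_2}, and P_{E_1} = P_{E_2}. -/

import Mathlib

open scoped Classical

variable {α : Type}

/-- Unordered words: multisets of symbols, as occurrence-count functions. -/
abbrev UWord (α : Type) := α → ℕ

/-- Multiplicities `*`, `+`, `?`, `0`, `1`. -/
inductive Mult : Type where
  | zero | one | opt | plus | star
deriving DecidableEq

/-- Interpretation of multiplicities as sets of natural numbers. -/
def Mult.sem : Mult → Set ℕ
  | .zero => {0}
  | .one => {1}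
  | .opt => {0, 1}
  | .plus => {n | 0 < n}
  | .star => Set.univ

/-- A disjunction `a₁^{M₁} | … | a_k^{M_k}`. -/
abbrev Disj (α : Type) := List (α × Mult)

/-- A disjunctive multiplicity expression `D₁^{M₁} ⊎ … ⊎ D_n^{M_n}`. -/
abbrev DME (α : Type) := List (Disj α × Mult)

/-- Language of `a^M`. -/
def singleLang (a : α) (m : Mult) : Set (UWord α) :=
  {w | w a ∈ m.sem ∧ ∀ b, b ≠ a → w b = 0}

/-- Language of a disjunction. -/
def disjLang (D : Disj α) : Set (UWord α) :=
  {w | ∃ p ∈ D, w ∈ singleLang p.1 p.2}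

/-- Pointwise (multiset) sum of a list of unordered words. -/
def sumWords (ws : List (UWord α)) : UWord α := fun a => (ws.map (fun u => u a)).sum

/-- Language of `D^M`. -/
def powLang (L : Set (UWord α)) (m : Mult) : Set (UWord α) :=
  {w | ∃ ws : List (UWord α), ws.length ∈ m.sem ∧ (∀ u ∈ ws, u ∈ L) ∧ w = sumWords ws}

/-- Language of a disjunctive multiplicity expression. -/
def dmeLang (E : DME α) : Set (UWord α) :=
  {w | ∃ ws : List (UWord α),
      List.Forall₂ (fun p u => u ∈ powLang (disjLang p.1) p.2) E ws ∧ w = sumWords ws}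

/-- Symbols occurring in a disjunctive multiplicity expression. -/
def dmeSymbols (E : DME α) : List α := E.flatMap (fun p => p.1.map Prod.fst)

/-- Normalized disjunctive multiplicity expression (each symbol occurs at most once,
each disjunction nonempty, and the two normal-form conditions of the paper). -/
def Normalized (E : DME α) : Prop :=
  (dmeSymbols E).Nodup ∧
  ∀ p ∈ E, p.1 ≠ [] ∧
    (p.2 ≠ Mult.one → p.2 = Mult.plus ∧ ∀ q ∈ p.1, q.2 = Mult.one) ∧
    ((∃ q ∈ p.1, (0 : ℕ) ∈ q.2.sem) → ∀ q ∈ p.1, (0 : ℕ) ∈ q.2.sem)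

/-- Conflicting pairs of siblings `C_E`. -/
def CE (E : DME α) : Set (α × α) :=
  {p | ¬ ∃ w ∈ dmeLang E, w p.1 ≠ 0 ∧ w p.2 ≠ 0}

/-- Extended cardinality map `N_E`. -/
def NE (E : DME α) : Set (α × ℕ) :=
  {p | ∃ w ∈ dmeLang E, w p.1 = p.2}

/-- Sets of required symbols `P_E`. -/
def PE (E : DME α) : Set (Set α) :=
  {X | ∀ w ∈ dmeLang E, ∃ a ∈ X, w a ≠ 0}

/-- Consistency of an unordered word with a characterizing triple. -/
def ConsTriple (w : UWord α) (C : Set (α × α)) (N : Set (α × ℕ)) (P : Set (Set α)) : Prop :=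
  (∀ p ∈ C, ¬ (w p.1 ≠ 0 ∧ w p.2 ≠ 0)) ∧
  (∀ a, (a, w a) ∈ N) ∧
  (∀ X ∈ P, ∃ a ∈ X, w a ≠ 0)

/-- Language of a disjunction-free multiplicity expression given as a list of
symbol/multiplicity pairs. -/
def dfLang (l : List (α × Mult)) : Set (UWord α) :=
  {w | (∀ p ∈ l, w p.1 ∈ p.2.sem) ∧ ∀ b, b ∉ l.map Prod.fst → w b = 0}

/-- Finite unordered trees. -/
inductive UTree (α : Type) : Type where
  | node : α → List (UTree α) → UTree α

def UTree.lab : UTree α → α | .node a _ => a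

def UTree.children : UTree α → List (UTree α) | .node _ ts => ts

/-- Twig queries: labels in `Σ ∪ {⋆}` (wildcard = `none`); each child subquery is tagged
with `false` for a child edge and `true` for a descendant edge. -/
inductive Twig (α : Type) : Type where
  | node : Option α → List (Twig α × Bool) → Twig α

/-- Proper subtree (proper descendant) relation. -/
inductive StrictDesc : UTree α → UTree α → Prop where
  | child {s t : UTree α} : s ∈ t.children → StrictDesc s t
  | step {s u t : UTree α} : StrictDesc s u → u ∈ t.children → StrictDesc s t

/-- `Sat t q`: the twig query `q` can be embedded in the tree `t`
(root to root, child edges to child edges, descendant edges to proper descendants,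
labels preserved up to wildcard). -/
def Sat : UTree α → Twig α → Prop
  | t, .node l qs =>
      (∀ x ∈ l, x = t.lab) ∧
      ∀ p ∈ qs, (p.2 = false → ∃ t' ∈ t.children, Sat t' p.1) ∧
                (p.2 = true → ∃ t', StrictDesc t' t ∧ Sat t' p.1)
termination_by t q => sizeOf q
decreasing_by
  all_goals
    obtain ⟨q', b'⟩ := p
    have h1 : sizeOf ((q', b') : Twig α × Bool) < sizeOf qs := List.sizeOf_lt_of_mem (by assumption)
    simp at h1 ⊢
    omega

/-- `TEmb t' t` : the tree `t'` can be embedded in the tree `t` (root-, child-, and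
label-preserving). -/
def TEmb : UTree α → UTree α → Prop
  | .node a ts', t => t.lab = a ∧ ∀ s' ∈ ts', ∃ s ∈ t.children, TEmb s' s

/-- `QGEmb E a q` : the twig query `q` can be embedded in the rooted graph with edge
relation `E` at root `a`. -/
def QGEmb (E : α → α → Prop) : α → Twig α → Prop
  | a, .node l qs =>
      (∀ x ∈ l, x = a) ∧
      ∀ p ∈ qs, (p.2 = false → ∃ b, E a b ∧ QGEmb E b p.1) ∧
                (p.2 = true → ∃ b, Relation.TransGen E a b ∧ QGEmb E b p.1)
termination_by a q => sizeOf q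
decreasing_by
  all_goals
    obtain ⟨q', b'⟩ := p
    have h1 : sizeOf ((q', b') : Twig α × Bool) < sizeOf qs := List.sizeOf_lt_of_mem (by assumption)
    simp at h1 ⊢
    omega

/-- Labeled paths of a tree: sequences of labels along root-to-node paths. -/
inductive IsLabPath : UTree α → List α → Prop where
  | root {a : α} {ts : List (UTree α)} : IsLabPath (UTree.node a ts) [a]
  | cons {a : α} {ts : List (UTree α)} {s : UTree α} {p : List α} :
      s ∈ ts → IsLabPath s p → IsLabPath (UTree.node a ts) (a :: p)

/-- Paths of a rooted graph: nonempty vertex sequences starting at the root and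
following edges. -/
def IsGPath (E : α → α → Prop) (root : α) (p : List α) : Prop :=
  p ≠ [] ∧ p.head? = some root ∧ p.Chain' E

/-- The unfolding of a rooted graph, truncated at depth `n`.  For a graph with no cycle
reachable from the root, taking `n = Fintype.card α` yields the full unfolding. -/
noncomputable def unfoldG [Fintype α] (E : α → α → Prop) : ℕ → α → UTree α
  | 0, a => .node a []
  | n + 1, a => .node a (((Finset.univ.filter fun b => E a b).toList).map (unfoldG E n))

/-- Number of leaves of a tree. -/
def leafCount : UTree α → ℕ
  | .node _ ts => if ts.isEmpty then 1 else (ts.attach.map (fun s => leafCount s.1)).sum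
decreasing_by
  have h1 := List.sizeOf_lt_of_mem s.2
  simp
  omega

/-- Disjunction-free multiplicity schema: a root label together with, for each label `a`,
a disjunction-free multiplicity expression given as the multiplicity `R a b` of every
symbol `b` (`Mult.zero` meaning `b` does not occur). -/
structure MS (α : Type) where
  root : α
  R : α → α → Mult

/-- Every node's children-label multiset matches the rule for the node's label. -/
inductive LocalOK [DecidableEq α] (R : α → α → Mult) : UTree α → Prop where
  | node {a : α} {ts : List (UTree α)} :
      (∀ b, ((ts.map UTree.lab).count b) ∈ (R a b).sem) →
      (∀ s ∈ ts, LocalOK R s) →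
      LocalOK R (UTree.node a ts)

/-- A tree satisfies a disjunction-free multiplicity schema. -/
def SatS [DecidableEq α] (S : MS α) (t : UTree α) : Prop :=
  t.lab = S.root ∧ LocalOK S.R t

/-- Edges of the universal dependency graph: `b` occurs in `R a` with multiplicity `+` or `1`. -/
def uEdge (S : MS α) (a b : α) : Prop := S.R a b = Mult.plus ∨ S.R a b = Mult.one

/-- Edges of the dependency graph: `b` occurs in `R a` with multiplicity in `{*,+,?,1}`. -/
def dEdge (S : MS α) (a b : α) : Prop := S.R a b ≠ Mult.zero

/-- A simulation of the rooted graph `(α, root, E)` in the tree `t`. -/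
def IsSimulation (E : α → α → Prop) (root : α) (t : UTree α) (R : α → UTree α → Prop) : Prop :=
  R root t ∧ (∀ a s, R a s → s.lab = a) ∧
  (∀ a s, R a s → ∀ b, E a b → ∃ s' ∈ s.children, R b s')

/-- One fuse step: two sibling nodes with the same label are merged into a single node
whose children are the children of both (applied anywhere in the tree). -/
inductive Fuse : UTree α → UTree α → Prop where
  | here {a b : α} {l₁ l₂ l₃ cs₁ cs₂ : List (UTree α)} :
      Fuse (UTree.node a (l₁ ++ UTree.node b cs₁ :: l₂ ++ UTree.node b cs₂ :: l₃))
           (UTree.node a (l₁ ++ UTree.node b (cs₁ ++ cs₂) :: l₂ ++ l₃))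
  | there {a : α} {s s' : UTree α} {l₁ l₂ : List (UTree α)} :
      Fuse s s' → Fuse (UTree.node a (l₁ ++ s :: l₂)) (UTree.node a (l₁ ++ s' :: l₂))

/-- One add step: an arbitrary new subtree is attached as an additional child of some
node of the tree. -/
inductive AddOp : UTree α → UTree α → Prop where
  | here {a : α} {s : UTree α} {l : List (UTree α)} :
      AddOp (UTree.node a l) (UTree.node a (s :: l))
  | there {a : α} {s s' : UTree α} {l₁ l₂ : List (UTree α)} :
      AddOp s s' → AddOp (UTree.node a (l₁ ++ s :: l₂)) (UTree.node a (l₁ ++ s' :: l₂))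

/-! ### Auxiliary development for the corollary -/

section Aux

variable {β γ : Type*}

/-- Restriction of a word to a list of symbols. -/
noncomputable def restrictW (w : UWord α) (l : List α) : UWord α :=
  fun a => if a ∈ l then w a else 0

/-- Indicator word of a single symbol. -/
noncomputable def indW (a : α) : UWord α := fun b => if b = a then 1 else 0

lemma sumWords_nil (a : α) : sumWords ([] : List (UWord α)) a = 0 := by simp [sumWords]

lemma sumWords_cons (u : UWord α) (ws : List (UWord α)) (a : α) :
    sumWords (u :: ws) a = u a + sumWords ws a := by simp [sumWords]

lemma sumWords_append (l₁ l₂ : List (UWord α)) (a : α) :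
    sumWords (l₁ ++ l₂) a = sumWords l₁ a + sumWords l₂ a := by simp [sumWords]

lemma sumWords_eq_zero {ws : List (UWord α)} {a : α} (h : ∀ u ∈ ws, u a = 0) :
    sumWords ws a = 0 := by
  simp only [sumWords]
  apply List.sum_eq_zero
  intro x hx
  obtain ⟨u, hu, rfl⟩ := List.mem_map.mp hx
  exact h u hu

lemma le_sumWords {ws : List (UWord α)} {v : UWord α} (h : v ∈ ws) (a : α) :
    v a ≤ sumWords ws a := by
  induction ws with
  | nil => cases h
  | cons u ws ih =>
    rw [sumWords_cons]
    rcases List.mem_cons.mp h with h | h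
    · subst h; exact Nat.le_add_right _ _
    · exact le_trans (ih h) (Nat.le_add_left _ _)

lemma forall₂_mem_right {R : β → γ → Prop} {l₁ : List β} {l₂ : List γ}
    (h : List.Forall₂ R l₁ l₂) {b : γ} (hb : b ∈ l₂) : ∃ a ∈ l₁, R a b := by
  induction h with
  | nil => cases hb
  | cons hr hf ih =>
    rcases List.mem_cons.mp hb with hb | hb
    · exact ⟨_, List.mem_cons_self, hb ▸ hr⟩
    · obtain ⟨a, ha, hRa⟩ := ih hb
      exact ⟨a, List.mem_cons_of_mem _ ha, hRa⟩

lemma powLang_support {D : Disj α} {M : Mult} {u : UWord α}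
    (hu : u ∈ powLang (disjLang D) M) {a : α} (ha : a ∉ D.map Prod.fst) : u a = 0 := by
  obtain ⟨ws, -, hmem, rfl⟩ := hu
  apply sumWords_eq_zero
  intro v hv
  obtain ⟨q, hq, hsem, hz⟩ := hmem v hv
  apply hz
  intro hcon
  exact ha (hcon ▸ List.mem_map.mpr ⟨q, hq, rfl⟩)

lemma dme_support {E : DME α} {w : UWord α} (hw : w ∈ dmeLang E) {a : α}
    (ha : a ∉ dmeSymbols E) : w a = 0 := by
  obtain ⟨ws, hf, rfl⟩ := hw
  apply sumWords_eq_zero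
  intro u hu
  obtain ⟨p, hp, hpu⟩ := forall₂_mem_right hf hu
  apply powLang_support hpu
  intro hcon
  exact ha (List.mem_flatMap.mpr ⟨p, hp, hcon⟩)

lemma powLang_one (L : Set (UWord α)) : powLang L Mult.one = L := by
  ext u
  constructor
  · rintro ⟨ws, hlen, hmem, rfl⟩
    simp only [Mult.sem, Set.mem_singleton_iff] at hlen
    obtain ⟨v, rfl⟩ := List.length_eq_one_iff.mp hlen
    have hv : sumWords [v] = v := by funext a; simp [sumWords]
    rw [hv]
    exact hmem v (List.mem_singleton_self v)
  · intro hu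
    refine ⟨[u], by simp [Mult.sem], ?_, ?_⟩
    · intro v hv; rw [List.mem_singleton.mp hv]; exact hu
    · funext a; simp [sumWords]

lemma sumWords_replicate (n : ℕ) (v : UWord α) (a : α) :
    sumWords (List.replicate n v) a = n * v a := by
  simp [sumWords, List.map_replicate, List.sum_replicate, smul_eq_mul]

lemma sumWords_flatMap_ind (D : Disj α) (u : UWord α)
    (hnd : (D.map Prod.fst).Nodup) (b : α) :
    sumWords (D.flatMap fun q => List.replicate (u q.1) (indW q.1)) b
      = if b ∈ D.map Prod.fst then u b else 0 := by
  induction D with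
  | nil => simp [sumWords]
  | cons q D ih =>
    rw [List.map_cons, List.nodup_cons] at hnd
    rw [List.flatMap_cons, sumWords_append, sumWords_replicate, ih hnd.2]
    by_cases hb : b = q.1
    · subst hb
      have h1 : indW q.1 q.1 = 1 := by simp [indW]
      rw [h1, if_neg hnd.1, List.map_cons, if_pos List.mem_cons_self]
      simp
    · have h1 : indW q.1 b = 0 := by simp [indW, hb]
      rw [h1, Nat.mul_zero, Nat.zero_add, List.map_cons]
      exact if_congr (by simp [hb]) rfl rfl

/-- Characterization of the plus-power of a disjunction with all inner multiplicities 1. -/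
lemma plus_char {D : Disj α} (hne : D ≠ []) (hone : ∀ q ∈ D, q.2 = Mult.one)
    (hnd : (D.map Prod.fst).Nodup) (u : UWord α) :
    u ∈ powLang (disjLang D) Mult.plus ↔
      (∀ a, a ∉ D.map Prod.fst → u a = 0) ∧ ∃ a ∈ D.map Prod.fst, u a ≠ 0 := by
  constructor
  · rintro ⟨ws, hlen, hmem, rfl⟩
    refine ⟨fun a ha => powLang_support ⟨ws, hlen, hmem, rfl⟩ ha, ?_⟩
    simp only [Mult.sem, Set.mem_setOf_eq] at hlen
    obtain ⟨v, hv⟩ := List.exists_mem_of_length_pos hlen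
    obtain ⟨q, hq, hsem, hz⟩ := hmem v hv
    rw [hone q hq] at hsem
    simp only [Mult.sem, Set.mem_singleton_iff] at hsem
    refine ⟨q.1, List.mem_map.mpr ⟨q, hq, rfl⟩, ?_⟩
    have := le_sumWords hv q.1
    omega
  · rintro ⟨hz, a, ha, hne'⟩
    obtain ⟨q₀, hq₀, rfl⟩ := List.mem_map.mp ha
    refine ⟨D.flatMap fun q => List.replicate (u q.1) (indW q.1), ?_, ?_, ?_⟩
    · simp only [Mult.sem, Set.mem_setOf_eq]
      have hmem : indW q₀.1 ∈ D.flatMap fun q => List.replicate (u q.1) (indW q.1) :=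
        List.mem_flatMap.mpr ⟨q₀, hq₀, List.mem_replicate.mpr ⟨hne', rfl⟩⟩
      exact List.length_pos_iff.mpr (List.ne_nil_of_mem hmem)
    · intro v hv
      obtain ⟨q, hq, hvq⟩ := List.mem_flatMap.mp hv
      rw [List.eq_of_mem_replicate hvq]
      refine ⟨q, hq, ?_, ?_⟩
      · rw [hone q hq]; simp [indW, Mult.sem]
      · intro b hb; simp [indW, hb]
    · funext b
      rw [sumWords_flatMap_ind D u hnd b]
      by_cases hb : b ∈ D.map Prod.fst
      · rw [if_pos hb]
      · rw [if_neg hb]; exact hz b hb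

lemma part_nodup {E : DME α} (hnd : (dmeSymbols E).Nodup) {p : Disj α × Mult}
    (hp : p ∈ E) : (p.1.map Prod.fst).Nodup := by
  induction E with
  | nil => cases hp
  | cons q E ih =>
    rw [dmeSymbols, List.flatMap_cons, List.nodup_append] at hnd
    rcases List.mem_cons.mp hp with hp | hp
    · exact hp ▸ hnd.1
    · exact ih hnd.2.1 hp

/-- Decomposition lemma: membership in the language of a symbol-disjoint DME is
componentwise. -/
lemma mem_dmeLang_iff {E : DME α} (hnd : (dmeSymbols E).Nodup) (w : UWord α) :
    w ∈ dmeLang E ↔ (∀ a, a ∉ dmeSymbols E → w a = 0) ∧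
      ∀ p ∈ E, restrictW w (p.1.map Prod.fst) ∈ powLang (disjLang p.1) p.2 := by
  induction E generalizing w with
  | nil =>
    constructor
    · rintro ⟨ws, hf, rfl⟩
      cases hf
      exact ⟨fun a _ => by simp [sumWords], fun p hp => absurd hp List.not_mem_nil⟩
    · rintro ⟨hz, -⟩
      exact ⟨[], List.Forall₂.nil, funext fun a => ((hz a (by simp [dmeSymbols])).trans
        (sumWords_nil a).symm)⟩
  | cons p E ih =>
    have hnd' := hnd
    rw [dmeSymbols, List.flatMap_cons, List.nodup_append] at hnd'
    obtain ⟨hnd₁, hnd₂, hdisj⟩ := hnd'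
    have hnd₂' : (dmeSymbols E).Nodup := hnd₂
    constructor
    · rintro ⟨ws, hf, rfl⟩
      cases hf with
      | cons hu hf' =>
        rename_i u ws'
        have hw' : sumWords ws' ∈ dmeLang E := ⟨ws', hf', rfl⟩
        have hmemE := (ih hnd₂' (sumWords ws')).mp hw'
        constructor
        · intro a ha
          rw [dmeSymbols, List.flatMap_cons, List.mem_append] at ha
          push_neg at ha
          rw [sumWords_cons]
          rw [powLang_support hu ha.1, dme_support hw' ha.2]
        · intro q hq
          rcases List.mem_cons.mp hq with hq | hq
          · subst hq
            have heq : restrictW (sumWords (u :: ws')) (q.1.map Prod.fst) = u := by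
              funext a
              unfold restrictW
              by_cases ha : a ∈ q.1.map Prod.fst
              · rw [if_pos ha, sumWords_cons,
                  dme_support hw' (fun hcon => hdisj a ha a hcon rfl), Nat.add_zero]
              · rw [if_neg ha, powLang_support hu ha]
            rw [heq]; exact hu
          · have heq : restrictW (sumWords (u :: ws')) (q.1.map Prod.fst)
                = restrictW (sumWords ws') (q.1.map Prod.fst) := by
              funext a
              unfold restrictW
              by_cases ha : a ∈ q.1.map Prod.fst
              · have haE : a ∈ dmeSymbols E := List.mem_flatMap.mpr ⟨q, hq, ha⟩
                have hap : a ∉ p.1.map Prod.fst := fun hcon => hdisj a hcon a haE rfl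
                rw [if_pos ha, if_pos ha, sumWords_cons, powLang_support hu hap,
                  Nat.zero_add]
              · rw [if_neg ha, if_neg ha]
            rw [heq]
            exact hmemE.2 q hq
    · rintro ⟨hz, hmem⟩
      have hu : restrictW w (p.1.map Prod.fst) ∈ powLang (disjLang p.1) p.2 :=
        hmem p List.mem_cons_self
      set w' : UWord α := fun a => if a ∈ p.1.map Prod.fst then 0 else w a with hw'def
      have hw' : w' ∈ dmeLang E := by
        rw [ih hnd₂' w']
        constructor
        · intro a ha
          by_cases hap : a ∈ p.1.map Prod.fst
          · simp only [hw'def, if_pos hap]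
          · simp only [hw'def, if_neg hap]
            apply hz
            rw [dmeSymbols, List.flatMap_cons, List.mem_append]
            push_neg
            exact ⟨hap, ha⟩
        · intro q hq
          have heq : restrictW w' (q.1.map Prod.fst) = restrictW w (q.1.map Prod.fst) := by
            funext a
            unfold restrictW
            by_cases ha : a ∈ q.1.map Prod.fst
            · have haE : a ∈ dmeSymbols E := List.mem_flatMap.mpr ⟨q, hq, ha⟩
              have hap : a ∉ p.1.map Prod.fst := fun hcon => hdisj a hcon a haE rfl
              rw [if_pos ha, if_pos ha]
              simp only [hw'def, if_neg hap]
            · rw [if_neg ha, if_neg ha]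
          rw [heq]
          exact hmem q (List.mem_cons_of_mem _ hq)
      obtain ⟨ws', hf', hws'⟩ := hw'
      refine ⟨restrictW w (p.1.map Prod.fst) :: ws', List.Forall₂.cons hu hf', ?_⟩
      funext a
      rw [sumWords_cons, ← hws']
      by_cases hap : a ∈ p.1.map Prod.fst
      · simp only [restrictW, if_pos hap, hw'def, if_pos hap, Nat.add_zero]
      · simp only [restrictW, if_neg hap, hw'def, Nat.zero_add]

/-- Soundness: every word of the language is consistent with the characterizing triple. -/
lemma sound_triple {E : DME α} {w : UWord α} (hw : w ∈ dmeLang E) :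
    ConsTriple w (CE E) (NE E) (PE E) :=
  ⟨fun p hp h => hp ⟨w, hw, h.1, h.2⟩, fun a => ⟨w, hw, rfl⟩, fun X hX => hX w hw⟩

/-- Completeness: every word consistent with the characterizing triple of a normalized
DME belongs to its language. -/
lemma cons_mem {E : DME α} (hE : Normalized E) {w : UWord α}
    (h : ConsTriple w (CE E) (NE E) (PE E)) : w ∈ dmeLang E := by
  obtain ⟨hC, hN, hP⟩ := h
  obtain ⟨hnd, hprop⟩ := hE
  rw [mem_dmeLang_iff hnd]
  constructor
  · intro a ha
    obtain ⟨w', hw', hwa⟩ := hN a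
    have hwa' : w' a = w a := hwa
    rw [← hwa']
    exact dme_support hw' ha
  · intro p hp
    obtain ⟨hDne, hdich, hnull⟩ := hprop p hp
    have hpnd : (p.1.map Prod.fst).Nodup := part_nodup hnd hp
    by_cases hM : p.2 = Mult.one
    · -- multiplicity 1
      rw [hM, powLang_one]
      by_cases hex : ∃ q ∈ p.1, w q.1 ≠ 0
      · obtain ⟨q, hq, hwq⟩ := hex
        have hzero : ∀ r ∈ p.1, r.1 ≠ q.1 → w r.1 = 0 := by
          intro r hr hrq
          by_contra hwr
          have hce : (q.1, r.1) ∈ CE E := by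
            rintro ⟨w', hw', h1, h2⟩
            have hwp := ((mem_dmeLang_iff hnd w').mp hw').2 p hp
            rw [hM, powLang_one] at hwp
            obtain ⟨s, hs, hsem, hz⟩ := hwp
            have hq1 : w' q.1 = restrictW w' (p.1.map Prod.fst) q.1 := by
              simp [restrictW, List.mem_map.mpr ⟨q, hq, rfl⟩]
            have hr1 : w' r.1 = restrictW w' (p.1.map Prod.fst) r.1 := by
              simp [restrictW, List.mem_map.mpr ⟨r, hr, rfl⟩]
            have hqs : q.1 = s.1 := by
              by_contra hc
              exact h1 (hq1.trans (hz q.1 hc))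
            have hrs : r.1 = s.1 := by
              by_contra hc
              exact h2 (hr1.trans (hz r.1 hc))
            exact hrq (hrs.trans hqs.symm)
          exact hC _ hce ⟨hwq, hwr⟩
        have hval : w q.1 ∈ q.2.sem := by
          obtain ⟨w', hw', hwa0⟩ := hN q.1
          have hwa : w' q.1 = w q.1 := hwa0
          have hwp := ((mem_dmeLang_iff hnd w').mp hw').2 p hp
          rw [hM, powLang_one] at hwp
          obtain ⟨s, hs, hsem, hz⟩ := hwp
          have hq1 : restrictW w' (p.1.map Prod.fst) q.1 = w q.1 := by
            simp only [restrictW, if_pos (List.mem_map.mpr ⟨q, hq, rfl⟩)]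
            exact hwa
          have hqs : q.1 = s.1 := by
            by_contra hc
            exact hwq ((hq1.symm.trans (hz q.1 hc)).symm ▸ rfl)
          have hqseq : q = s :=
            List.inj_on_of_nodup_map hpnd hq hs hqs
          subst hqseq
          rw [← hq1]
          exact hsem
        refine ⟨q, hq, ?_, ?_⟩
        · simp only [restrictW, if_pos (List.mem_map.mpr ⟨q, hq, rfl⟩)]
          exact hval
        · intro b hb
          simp only [restrictW]
          by_cases hbm : b ∈ p.1.map Prod.fst
          · rw [if_pos hbm]
            obtain ⟨r, hr, rfl⟩ := List.mem_map.mp hbm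
            exact hzero r hr hb
          · rw [if_neg hbm]
      · push_neg at hex
        have hq0 : ∃ q ∈ p.1, (0 : ℕ) ∈ q.2.sem := by
          by_contra hc
          push_neg at hc
          have hpe : {a | a ∈ p.1.map Prod.fst} ∈ PE E := by
            intro w' hw'
            have hwp := ((mem_dmeLang_iff hnd w').mp hw').2 p hp
            rw [hM, powLang_one] at hwp
            obtain ⟨s, hs, hsem, hz⟩ := hwp
            have hs1 : restrictW w' (p.1.map Prod.fst) s.1 = w' s.1 := by
              simp [restrictW, List.mem_map.mpr ⟨s, hs, rfl⟩]
            refine ⟨s.1, List.mem_map.mpr ⟨s, hs, rfl⟩, ?_⟩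
            intro hcon
            exact hc s hs (by rw [← hcon, ← hs1]; exact hsem)
          obtain ⟨a, ha, hwa⟩ := hP _ hpe
          obtain ⟨q, hq, rfl⟩ := List.mem_map.mp ha
          exact hwa (hex q hq)
        obtain ⟨q, hq, hq0⟩ := hq0
        refine ⟨q, hq, ?_, ?_⟩
        · simp only [restrictW, if_pos (List.mem_map.mpr ⟨q, hq, rfl⟩), hex q hq]
          exact hq0
        · intro b hb
          simp only [restrictW]
          by_cases hbm : b ∈ p.1.map Prod.fst
          · rw [if_pos hbm]
            obtain ⟨r, hr, rfl⟩ := List.mem_map.mp hbm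
            exact hex r hr
          · rw [if_neg hbm]
    · -- multiplicity +
      obtain ⟨hM', hinner⟩ := hdich hM
      rw [hM', plus_char hDne hinner hpnd]
      constructor
      · intro a ha; simp [restrictW, ha]
      · have hpe : {a | a ∈ p.1.map Prod.fst} ∈ PE E := by
          intro w' hw'
          have hwp := ((mem_dmeLang_iff hnd w').mp hw').2 p hp
          rw [hM', plus_char hDne hinner hpnd] at hwp
          obtain ⟨-, a, ha, hwa⟩ := hwp
          refine ⟨a, ha, ?_⟩
          simpa [restrictW, ha] using hwa
        obtain ⟨a, ha, hwa⟩ := hP _ hpe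
        have ha' : a ∈ p.1.map Prod.fst := ha
        refine ⟨a, ha', ?_⟩
        simpa [restrictW, ha'] using hwa

end Aux

/-- Corollary: two normalized disjunctive multiplicity expressions define
the same language iff they have the same characterizing triples. -/
theorem dme_equivalence_iff_equal_triples
    {α : Type} (E₁ E₂ : DME α) (h₁ : Normalized E₁) (h₂ : Normalized E₂) :
    dmeLang E₁ = dmeLang E₂ ↔
      (CE E₁ = CE E₂ ∧ NE E₁ = NE E₂ ∧ PE E₁ = PE E₂) := by
  constructor
  · intro h
    refine ⟨?_, ?_, ?_⟩ <;> simp only [CE, NE, PE, h]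
  · rintro ⟨hc, hn, hp⟩
    ext w
    constructor
    · intro hw
      exact cons_mem h₂ (hc ▸ hn ▸ hp ▸ sound_triple hw)
    · intro hw
      exact cons_mem h₁ (hc ▸ hn ▸ hp ▸ sound_triple hw)
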